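/- For all positive reals ε' and δ there exists ε = ε(ε', δ) > 0 such that the following holds. Let (V₁, V₂, V₃) be an ε-typical (ε, p)-regular triple with minimum density at least δp, and assume that the endpoints of every edge between V₂ and V₃ have at most 4p²|V₁| common neighbours in V₁. Then V₁ contains at most ε'|V₁| vertices that are not ε'-good. -/

import Mathlib

open Finset

open scoped Classical

noncomputable section

namespace RandomTriangle

/-- Number of ordered adjacent pairs between `X` and `Y`. -/
def eBtw {V : Type*} (G : SimpleGraph V) (X Y : Finset V) : ℕ :=
  ((X ×ˢ Y).filter fun a => G.Adj a.1 a.2).card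

/-- Edge density between `X` and `Y`. -/
def dens {V : Type*} (G : SimpleGraph V) (X Y : Finset V) : ℝ :=
  (eBtw G X Y : ℝ) / ((X.card : ℝ) * (Y.card : ℝ))

/-- Number of neighbours of `v` in `X`. -/
def degIn {V : Type*} (G : SimpleGraph V) (v : V) (X : Finset V) : ℕ :=
  (X.filter fun w => G.Adj v w).card

/-- Neighbourhood of `v` inside `X`. -/
def nbhdIn {V : Type*} (G : SimpleGraph V) (v : V) (X : Finset V) : Finset V :=
  X.filter fun w => G.Adj v w

/-- Number of common neighbours of `u` and `w` inside `X`. -/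
def codegIn {V : Type*} (G : SimpleGraph V) (u w : V) (X : Finset V) : ℕ :=
  (X.filter fun x => G.Adj u x ∧ G.Adj w x).card

/-- `(ε, p)`-regular pair `(X, Y)`. -/
def RegularPair {V : Type*} (G : SimpleGraph V) (ε p : ℝ) (X Y : Finset V) : Prop :=
  ∀ X' ⊆ X, ∀ Y' ⊆ Y, ε * X.card ≤ (X'.card : ℝ) → ε * Y.card ≤ (Y'.card : ℝ) →
    |dens G X Y - dens G X' Y'| ≤ ε * p

/-- `(ε, p)`-regular triple. -/
def RegularTriple {V : Type*} (G : SimpleGraph V) (ε p : ℝ) (V₁ V₂ V₃ : Finset V) : Prop :=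
  RegularPair G ε p V₁ V₂ ∧ RegularPair G ε p V₁ V₃ ∧ RegularPair G ε p V₂ V₃

/-- `v ∈ V₁` is an `ε`-typical vertex of the triple `(V₁, V₂, V₃)`:
its neighbourhoods in `V₂`, `V₃` have the expected size `(1 ± ε)·d₁ᵢp|Vᵢ|`
(note `d₁ᵢ p = dens G V₁ Vᵢ`), and they contain large subsets forming an
`(ε, p)`-regular pair of density `(1 ± ε)·d₂₃p`. -/
def TypicalVertex {V : Type*} (G : SimpleGraph V) (ε p : ℝ) (V₁ V₂ V₃ : Finset V) (v : V) :
    Prop :=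
  ((1 - ε) * (dens G V₁ V₂ * V₂.card) ≤ ((nbhdIn G v V₂).card : ℝ) ∧
    ((nbhdIn G v V₂).card : ℝ) ≤ (1 + ε) * (dens G V₁ V₂ * V₂.card)) ∧
  ((1 - ε) * (dens G V₁ V₃ * V₃.card) ≤ ((nbhdIn G v V₃).card : ℝ) ∧
    ((nbhdIn G v V₃).card : ℝ) ≤ (1 + ε) * (dens G V₁ V₃ * V₃.card)) ∧
  ∃ N₂' ⊆ nbhdIn G v V₂, ∃ N₃' ⊆ nbhdIn G v V₃,
    (1 - ε) * ((nbhdIn G v V₂).card : ℝ) ≤ (N₂'.card : ℝ) ∧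
    (1 - ε) * ((nbhdIn G v V₃).card : ℝ) ≤ (N₃'.card : ℝ) ∧
    RegularPair G ε p N₂' N₃' ∧
    (1 - ε) * dens G V₂ V₃ ≤ dens G N₂' N₃' ∧
    dens G N₂' N₃' ≤ (1 + ε) * dens G V₂ V₃

/-- An `ε`-typical triple: `(ε,p)`-regular and in each part all but at most an
`ε`-fraction of the vertices are `ε`-typical. -/
def TypicalTriple {V : Type*} (G : SimpleGraph V) (ε p : ℝ) (V₁ V₂ V₃ : Finset V) : Prop :=
  RegularTriple G ε p V₁ V₂ V₃ ∧
  ((V₁.filter fun v => ¬ TypicalVertex G ε p V₁ V₂ V₃ v).card : ℝ) ≤ ε * V₁.card ∧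
  ((V₂.filter fun v => ¬ TypicalVertex G ε p V₂ V₁ V₃ v).card : ℝ) ≤ ε * V₂.card ∧
  ((V₃.filter fun v => ¬ TypicalVertex G ε p V₃ V₁ V₂ v).card : ℝ) ≤ ε * V₃.card

/-- A `(δ, ε, p)`-super-regular triple. -/
def SuperRegularTriple {V : Type*} (G : SimpleGraph V) (δ ε p : ℝ) (V₁ V₂ V₃ : Finset V) :
    Prop :=
  RegularTriple G ε p V₁ V₂ V₃ ∧
  δ * p ≤ dens G V₁ V₂ ∧ δ * p ≤ dens G V₁ V₃ ∧ δ * p ≤ dens G V₂ V₃ ∧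
  (∀ v ∈ V₁, TypicalVertex G ε p V₁ V₂ V₃ v) ∧
  (∀ v ∈ V₂, TypicalVertex G ε p V₂ V₁ V₃ v) ∧
  (∀ v ∈ V₃, TypicalVertex G ε p V₃ V₁ V₂ v)

/-- An edge `(u, w)` with `u ∈ V₂`, `w ∈ V₃` is `ε`-good (w.r.t. `V₁`) if its endpoints
have at least `(1 - ε)·d₁₂d₁₃p²|V₁|` common neighbours in `V₁`
(note `d₁₂d₁₃p² = dens G V₁ V₂ * dens G V₁ V₃`). -/
def GoodEdge {V : Type*} (G : SimpleGraph V) (ε : ℝ) (V₁ V₂ V₃ : Finset V) (u w : V) : Prop :=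
  (1 - ε) * (dens G V₁ V₂ * dens G V₁ V₃ * V₁.card) ≤ (codegIn G u w V₁ : ℝ)

/-- An `ε`-typical vertex `v ∈ V₁` is `ε`-good if the pair of its neighbourhoods in
`V₂`, `V₃` spans at most `ε·d₁₂d₁₃d₂₃p³|V₂||V₃|` edges that are not `ε`-good. -/
def GoodVertex {V : Type*} (G : SimpleGraph V) (ε p : ℝ) (V₁ V₂ V₃ : Finset V) (v : V) :
    Prop :=
  TypicalVertex G ε p V₁ V₂ V₃ v ∧
  ((((nbhdIn G v V₂) ×ˢ (nbhdIn G v V₃)).filter fun uw =>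
      G.Adj uw.1 uw.2 ∧ ¬ GoodEdge G ε V₁ V₂ V₃ uw.1 uw.2).card : ℝ) ≤
    ε * (dens G V₁ V₂ * dens G V₁ V₃ * dens G V₂ V₃ * V₂.card * V₃.card)

/-- A `(δ, ε, p)`-strong-super-regular triple. -/
def StrongSuperRegularTriple {V : Type*} (G : SimpleGraph V) (δ ε p : ℝ)
    (V₁ V₂ V₃ : Finset V) : Prop :=
  SuperRegularTriple G δ ε p V₁ V₂ V₃ ∧
  (∀ v ∈ V₁, GoodVertex G ε p V₁ V₂ V₃ v) ∧
  (∀ v ∈ V₂, GoodVertex G ε p V₂ V₁ V₃ v) ∧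
  (∀ v ∈ V₃, GoodVertex G ε p V₃ V₁ V₂ v)

/-- A triangle packing: a collection of pairwise vertex-disjoint triangles of `G`. -/
def IsTrianglePacking {V : Type*} [DecidableEq V] (G : SimpleGraph V)
    (T : Finset (Finset V)) : Prop :=
  (∀ t ∈ T, t.card = 3 ∧ ∀ x ∈ t, ∀ y ∈ t, x ≠ y → G.Adj x y) ∧
  (∀ s ∈ T, ∀ t ∈ T, s ≠ t → Disjoint s t)

def idx0 {k : ℕ} (t : Fin k) : Fin (3 * k) := ⟨3 * t.1, by have := t.2; omega⟩
def idx1 {k : ℕ} (t : Fin k) : Fin (3 * k) := ⟨3 * t.1 + 1, by have := t.2; omega⟩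
def idx2 {k : ℕ} (t : Fin k) : Fin (3 * k) := ⟨3 * t.1 + 2, by have := t.2; omega⟩

/-- The endpoints of every edge between `A` and `B` have at most `4|C|p²` common
neighbours in `C`. -/
def CodegBound {V : Type*} (G : SimpleGraph V) (p : ℝ) (A B C : Finset V) : Prop :=
  ∀ u ∈ A, ∀ w ∈ B, G.Adj u w → (codegIn G u w C : ℝ) ≤ 4 * C.card * p ^ 2

/-- The probability, in the Erdős–Rényi random graph `G(n, p)`, of the event `A`. -/
def gnpProb (n : ℕ) (p : ℝ) (A : Set (SimpleGraph (Fin n))) : ℝ :=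
  ∑ G ∈ Finset.univ.filter (fun G => G ∈ A),
    p ^ ((Finset.univ.filter fun e : Sym2 (Fin n) => e ∈ G.edgeSet).card) *
      (1 - p) ^ (n.choose 2 - (Finset.univ.filter fun e : Sym2 (Fin n) => e ∈ G.edgeSet).card)

/-- A sequence of graph properties holds asymptotically almost surely in `G(n, p n)`. -/
def AAS (p : ℕ → ℝ) (P : ∀ n : ℕ, SimpleGraph (Fin n) → Prop) : Prop :=
  Filter.Tendsto (fun n => gnpProb n (p n) {G | P n G}) Filter.atTop (nhds 1)

end RandomTriangle

open RandomTriangle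

section Helpers

variable {V : Type*} (G : SimpleGraph V)

lemma eBtw_comm (X Y : Finset V) : eBtw G X Y = eBtw G Y X := by
  classical
  unfold eBtw
  apply Finset.card_bij (fun a _ => (a.2, a.1))
  · intro a ha
    simp only [Finset.mem_filter, Finset.mem_product] at ha ⊢
    exact ⟨⟨ha.1.2, ha.1.1⟩, ha.2.symm⟩
  · intro a ha b hb h
    simpa [Prod.ext_iff, and_comm] using Prod.ext_iff.1 h
  · intro b hb
    simp only [Finset.mem_filter, Finset.mem_product] at hb
    exact ⟨(b.2, b.1), by simp [Finset.mem_filter, hb.1.1, hb.1.2, hb.2.symm], rfl⟩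

lemma eBtw_eq_sum (X Y : Finset V) :
    eBtw G X Y = ∑ y ∈ Y, (X.filter fun x => G.Adj x y).card := by
  classical
  unfold eBtw
  rw [Finset.card_eq_sum_card_fiberwise (f := Prod.snd) (t := Y)
    (fun a ha => by simp only [Finset.mem_coe, Finset.mem_filter, Finset.mem_product] at ha; exact ha.1.2)]
  refine Finset.sum_congr rfl fun y hy => ?_
  apply Finset.card_bij (fun a _ => a.1)
  · intro a ha
    simp only [Finset.mem_filter, Finset.mem_product] at ha ⊢
    exact ⟨ha.1.1.1, ha.2 ▸ ha.1.2⟩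
  · intro a ha b hb h
    simp only [Finset.mem_filter] at ha hb
    exact Prod.ext h (ha.2.trans hb.2.symm)
  · intro x hx
    simp only [Finset.mem_filter] at hx
    exact ⟨(x, y), by simp [Finset.mem_filter, hx.1, hx.2, hy], rfl⟩

lemma dens_nonneg (X Y : Finset V) : 0 ≤ dens G X Y := by
  unfold RandomTriangle.dens; positivity

lemma dens_comm (X Y : Finset V) : dens G X Y = dens G Y X := by
  unfold RandomTriangle.dens; rw [eBtw_comm, mul_comm]

lemma eBtw_cast (X Y : Finset V) :
    (eBtw G X Y : ℝ) = dens G X Y * ((X.card : ℝ) * (Y.card : ℝ)) := by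
  unfold RandomTriangle.dens
  by_cases h : ((X.card : ℝ) * (Y.card : ℝ)) = 0
  · rw [h, mul_zero]
    rcases mul_eq_zero.1 h with h0 | h0 <;>
    · have : X = ∅ ∨ Y = ∅ := by
        first
        | exact Or.inl (Finset.card_eq_zero.1 (by exact_mod_cast h0))
        | exact Or.inr (Finset.card_eq_zero.1 (by exact_mod_cast h0))
      rcases this with h1 | h1 <;> simp [eBtw, h1]
  · rw [div_mul_cancel₀ _ h]

lemma eBtw_mono {X X' Y Y' : Finset V} (hX : X ⊆ X') (hY : Y ⊆ Y') :
    eBtw G X Y ≤ eBtw G X' Y' := by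
  classical
  exact Finset.card_le_card (Finset.filter_subset_filter _
    (Finset.product_subset_product hX hY))

lemma dens_pos_cards {X Y : Finset V} {d : ℝ} (hd : 0 < d) (h : d ≤ dens G X Y) :
    (1 : ℝ) ≤ X.card ∧ (1 : ℝ) ≤ Y.card := by
  have hXY : ((X.card : ℝ) * (Y.card : ℝ)) ≠ 0 := by
    intro h0
    rw [RandomTriangle.dens, h0, div_zero] at h
    linarith
  rcases mul_ne_zero_iff.1 hXY with ⟨h1, h2⟩
  constructor <;> rw [Nat.one_le_cast, Nat.one_le_iff_ne_zero]
  · exact fun h0 => h1 (by exact_mod_cast congrArg (Nat.cast : ℕ → ℝ) h0)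
  · exact fun h0 => h2 (by exact_mod_cast congrArg (Nat.cast : ℕ → ℝ) h0)

end Helpers

section Helpers2

variable {V : Type*} (G : SimpleGraph V)

lemma regularPair_mono {ε ε' p : ℝ} {X Y : Finset V} (hp : 0 ≤ p) (hεε : ε ≤ ε')
    (h : RegularPair G ε p X Y) : RegularPair G ε' p X Y := by
  intro X' hX' Y' hY' hX'c hY'c
  have h1 : ε * X.card ≤ (X'.card : ℝ) :=
    le_trans (mul_le_mul_of_nonneg_right hεε (Nat.cast_nonneg _)) hX'c
  have h2 : ε * Y.card ≤ (Y'.card : ℝ) :=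
    le_trans (mul_le_mul_of_nonneg_right hεε (Nat.cast_nonneg _)) hY'c
  exact le_trans (h X' hX' Y' hY' h1 h2) (mul_le_mul_of_nonneg_right hεε hp)

lemma typicalVertex_mono {ε ε' p : ℝ} {V₁ V₂ V₃ : Finset V} {v : V} (hp : 0 ≤ p)
    (hεε : ε ≤ ε') (h : TypicalVertex G ε p V₁ V₂ V₃ v) :
    TypicalVertex G ε' p V₁ V₂ V₃ v := by
  obtain ⟨⟨h2l, h2r⟩, ⟨h3l, h3r⟩, N₂', hN₂', N₃', hN₃', hc2, hc3, hreg, hdl, hdr⟩ := h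
  have d2 : (0:ℝ) ≤ dens G V₁ V₂ * V₂.card :=
    mul_nonneg (dens_nonneg G _ _) (Nat.cast_nonneg _)
  have d3 : (0:ℝ) ≤ dens G V₁ V₃ * V₃.card :=
    mul_nonneg (dens_nonneg G _ _) (Nat.cast_nonneg _)
  have d23 : (0:ℝ) ≤ dens G V₂ V₃ := dens_nonneg G _ _
  refine ⟨⟨by nlinarith, by nlinarith⟩, ⟨by nlinarith, by nlinarith⟩,
    N₂', hN₂', N₃', hN₃', ?_, ?_, regularPair_mono G hp hεε hreg, ?_, ?_⟩
  · exact le_trans (by nlinarith [Nat.cast_nonneg (α := ℝ) (nbhdIn G v V₂).card]) hc2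
  · exact le_trans (by nlinarith [Nat.cast_nonneg (α := ℝ) (nbhdIn G v V₃).card]) hc3
  · nlinarith
  · nlinarith

lemma goodEdge_mono {ε ε' : ℝ} {V₁ V₂ V₃ : Finset V} {u w : V} (hεε : ε ≤ ε')
    (h : GoodEdge G ε V₁ V₂ V₃ u w) : GoodEdge G ε' V₁ V₂ V₃ u w := by
  unfold GoodEdge at h ⊢
  have : (0:ℝ) ≤ dens G V₁ V₂ * dens G V₁ V₃ * V₁.card :=
    mul_nonneg (mul_nonneg (dens_nonneg G _ _) (dens_nonneg G _ _)) (Nat.cast_nonneg _)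
  nlinarith

lemma sum_card_filter_comm {W : Type*} (A : Finset V) (B : Finset W) (P : V → W → Prop) :
    ∑ v ∈ A, (B.filter (P v)).card = ∑ b ∈ B, (A.filter fun v => P v b).card := by
  classical
  simp only [Finset.card_filter]
  exact Finset.sum_comm

lemma small_badset {ε p : ℝ} {X Y W : Finset V}
    (hε : 0 < ε) (hε1 : ε ≤ 1) (hreg : RegularPair G ε p X Y) (hWY : W ⊆ Y)
    {c : ℝ} (hc : 0 ≤ c)
    (hdeg : ∀ w ∈ W, ((X.filter fun x => G.Adj x w).card : ℝ) ≤ c)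
    (hgap : c < (dens G X Y - ε * p) * X.card) :
    (W.card : ℝ) < ε * Y.card := by
  classical
  by_contra hcon
  push_neg at hcon
  have hX : (0:ℝ) < X.card := by
    rcases lt_or_ge 0 ((X.card : ℝ)) with h | h
    · exact h
    · have : (X.card : ℝ) = 0 := le_antisymm h (Nat.cast_nonneg _)
      rw [this, mul_zero] at hgap
      exact absurd hgap (not_lt.2 hc)
  have hreg' := hreg X subset_rfl W hWY
    (by nlinarith [Nat.cast_nonneg (α := ℝ) X.card]) hcon
  have hlow : dens G X Y - ε * p ≤ dens G X W := by
    have h1 := (abs_le.1 hreg').2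
    linarith
  have hE : (eBtw G X W : ℝ) ≤ (W.card : ℝ) * c := by
    rw [eBtw_eq_sum]
    push_cast
    calc (∑ w ∈ W, ((X.filter fun x => G.Adj x w).card : ℝ))
        ≤ ∑ _w ∈ W, c := Finset.sum_le_sum hdeg
      _ = (W.card : ℝ) * c := by rw [Finset.sum_const, nsmul_eq_mul]
  have hdXW : dens G X W ≤ c / X.card := by
    by_cases hW0 : (W.card : ℝ) = 0
    · rw [RandomTriangle.dens, hW0, mul_zero, div_zero]
      positivity
    · have hW0' : (0:ℝ) < W.card := lt_of_le_of_ne (Nat.cast_nonneg _) (Ne.symm hW0)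
      rw [RandomTriangle.dens, div_le_div_iff₀ (by positivity) hX]
      calc (eBtw G X W : ℝ) * (X.card : ℝ) ≤ ((W.card : ℝ) * c) * X.card := by
            exact mul_le_mul_of_nonneg_right hE (le_of_lt hX)
        _ = c * ((X.card : ℝ) * (W.card : ℝ)) := by ring
  exact absurd (le_trans hlow hdXW) (not_le.2 ((div_lt_iff₀ hX).2 hgap))

end Helpers2

section Helpers3

variable {V : Type*} (G : SimpleGraph V)

lemma gap_arith {ε e p δ t dd n dN cN : ℝ}
    (hp : 0 < p) (hδ : 0 < δ) (hε : 0 < ε) (he : 0 < e) (he1 : e ≤ 1/2)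
    (hε10 : ε ≤ e/10) (hεδe : ε ≤ δ*e/2)
    (ht : δ*p ≤ t) (hdd : 0 < dd) (hn : 1 ≤ n)
    (hdN : (1-ε)*t ≤ dN) (hcN : (1-ε)^2*dd*n ≤ cN) :
    (1-e)*(dd*t*n) < (dN - ε*p)*cN := by
  have hε1 : ε ≤ 1/20 := by linarith
  have htpos : 0 < t := lt_of_lt_of_le (by positivity) ht
  have hb1 : (1-ε)^3 ≥ 1 - 3*ε := by
    nlinarith [mul_nonneg (mul_nonneg hε.le hε.le) (by linarith : (0:ℝ) ≤ 3 - ε)]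
  have hb2 : t*(1-ε)^3 ≥ t*(1-3*ε) := mul_le_mul_of_nonneg_left hb1 htpos.le
  have hb3 : ε*p*(1-ε)^2 ≤ ε*p := by
    nlinarith [mul_nonneg (mul_nonneg (mul_nonneg hε.le hε.le) hp.le)
      (by linarith : (0:ℝ) ≤ 2-ε)]
  have hb4 : t*(e - 3*ε) ≥ δ*p*(7*e/10) := by
    have h7 : (7*e/10 : ℝ) ≤ e - 3*ε := by linarith
    have h8 : (0:ℝ) ≤ e - 3*ε := by linarith
    have h9 := mul_le_mul_of_nonneg_right ht h8
    nlinarith [mul_le_mul_of_nonneg_left h7 (by positivity : (0:ℝ) ≤ δ*p)]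
  have hkey : ((1-ε)*t - ε*p) * (1-ε)^2 ≥ (1-e)*t + δ*e*p/5 := by
    have hexp : ((1-ε)*t - ε*p) * (1-ε)^2 = t*(1-ε)^3 - ε*p*(1-ε)^2 := by ring
    rw [hexp]
    nlinarith [hb2, hb3, hb4]
  have hpos1 : (0:ℝ) < (1-ε)*t - ε*p := by nlinarith [mul_pos hδ (mul_pos he hp)]
  have h2 : ((1-ε)*t - ε*p) * ((1-ε)^2*dd*n) ≤ (dN - ε*p)*cN := by
    apply mul_le_mul (by linarith) hcN (by positivity) (by linarith)
  have hddn : (0:ℝ) < dd * n := by positivity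
  calc (1-e)*(dd*t*n) = ((1-e)*t) * (dd*n) := by ring
    _ < ((1-e)*t + δ*e*p/5) * (dd*n) := by nlinarith [mul_pos hδ (mul_pos he hp)]
    _ ≤ (((1-ε)*t - ε*p) * (1-ε)^2) * (dd*n) := mul_le_mul_of_nonneg_right hkey hddn.le
    _ = ((1-ε)*t - ε*p) * ((1-ε)^2*dd*n) := by ring
    _ ≤ (dN - ε*p)*cN := h2

lemma few_bad_at {ε e p δ : ℝ} {V₁ Vb Vc : Finset V} {x : V}
    (hp : 0 < p) (hδ : 0 < δ) (hε : 0 < ε) (he : 0 < e) (he1 : e ≤ 1/2)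
    (hε10 : ε ≤ e/10) (hεδe : ε ≤ δ*e/2)
    (hdb : δ * p ≤ dens G V₁ Vb) (hdc : δ * p ≤ dens G V₁ Vc)
    (hx : TypicalVertex G ε p Vb V₁ Vc x)
    (P : V → Prop)
    (hP : ∀ y ∈ nbhdIn G x Vc, P y → ∀ S ⊆ nbhdIn G x V₁,
      ((S.filter fun z => G.Adj z y).card : ℝ) ≤
        (1-e) * (dens G V₁ Vb * dens G V₁ Vc * V₁.card)) :
    (((nbhdIn G x Vc).filter fun y => P y).card : ℝ) ≤
      2*ε*(1+ε) * (dens G Vb Vc * Vc.card) := by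
  classical
  obtain ⟨⟨hN1l, hN1r⟩, ⟨hNcl, hNcr⟩, N₁', hN₁'sub, Nc', hNc'sub, hc1, hcc, hreg, hdl, hdr⟩ := hx
  have hε1 : ε ≤ 1/20 := by linarith
  have hn₁ : (1:ℝ) ≤ V₁.card := (dens_pos_cards G (by positivity) hdb).1
  have hddpos : (0:ℝ) < dens G V₁ Vb := lt_of_lt_of_le (by positivity) hdb
  have htpos : (0:ℝ) < dens G V₁ Vc := lt_of_lt_of_le (by positivity) hdc
  have hcnn : (0:ℝ) ≤ (1-e) * (dens G V₁ Vb * dens G V₁ Vc * V₁.card) := by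
    have h0 : (0:ℝ) ≤ dens G V₁ Vb * dens G V₁ Vc * V₁.card := by positivity
    nlinarith
  have hN1l' : (1-ε) * (dens G V₁ Vb * V₁.card) ≤ ((nbhdIn G x V₁).card : ℝ) := by
    rwa [dens_comm G V₁ Vb]
  have hN1'big : (1-ε)^2 * dens G V₁ Vb * V₁.card ≤ (N₁'.card : ℝ) := by
    nlinarith [hc1, hN1l', Nat.cast_nonneg (α := ℝ) (nbhdIn G x V₁).card]
  have hsmall : ((Nc'.filter P).card : ℝ) < ε * Nc'.card := by
    refine small_badset G hε (by linarith) hreg (Finset.filter_subset _ _) hcnn ?_ ?_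
    · intro w hw
      rw [Finset.mem_filter] at hw
      exact hP w (hNc'sub hw.1) hw.2 N₁' hN₁'sub
    · exact gap_arith hp hδ hε he he1 hε10 hεδe hdc hddpos hn₁ hdl hN1'big
  have hsub : (nbhdIn G x Vc).filter (fun y => P y) ⊆
      (Nc'.filter P) ∪ ((nbhdIn G x Vc) \ Nc') := by
    intro y hy
    rw [Finset.mem_filter] at hy
    by_cases hy' : y ∈ Nc'
    · exact Finset.mem_union_left _ (Finset.mem_filter.2 ⟨hy', hy.2⟩)
    · exact Finset.mem_union_right _ (Finset.mem_sdiff.2 ⟨hy.1, hy'⟩)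
  have hNc'le : Nc'.card ≤ (nbhdIn G x Vc).card := Finset.card_le_card hNc'sub
  have hsd : (((nbhdIn G x Vc) \ Nc').card : ℝ) =
      ((nbhdIn G x Vc).card : ℝ) - Nc'.card := by
    rw [Finset.card_sdiff_of_subset hNc'sub, Nat.cast_sub hNc'le]
  have hsd' : (((nbhdIn G x Vc) \ Nc').card : ℝ) ≤ ε * (nbhdIn G x Vc).card := by
    rw [hsd]; linarith [hcc]
  have hcard : (((nbhdIn G x Vc).filter fun y => P y).card : ℝ) ≤
      ((Nc'.filter P).card : ℝ) + (((nbhdIn G x Vc) \ Nc').card : ℝ) := by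
    have h1 := Finset.card_le_card hsub
    have h2 := Finset.card_union_le (Nc'.filter P) ((nbhdIn G x Vc) \ Nc')
    exact_mod_cast le_trans h1 h2
  have hNc'real : ((Nc'.card : ℝ)) ≤ (nbhdIn G x Vc).card := by exact_mod_cast hNc'le
  have h5 : (((nbhdIn G x Vc).filter fun y => P y).card : ℝ) ≤
      2*ε*(nbhdIn G x Vc).card := by
    have := mul_le_mul_of_nonneg_left hNc'real hε.le
    linarith
  have h6 : 2*ε*((nbhdIn G x Vc).card : ℝ) ≤ 2*ε*((1+ε) * (dens G Vb Vc * Vc.card)) :=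
    mul_le_mul_of_nonneg_left hNcr (by positivity)
  calc (((nbhdIn G x Vc).filter fun y => P y).card : ℝ)
      ≤ 2*ε*(nbhdIn G x Vc).card := h5
    _ ≤ 2*ε*((1+ε) * (dens G Vb Vc * Vc.card)) := h6
    _ = 2*ε*(1+ε) * (dens G Vb Vc * Vc.card) := by ring

end Helpers3

section BadBound

variable {V : Type*}

set_option maxHeartbeats 1600000 in
lemma bad_edges_bound (G : SimpleGraph V) {ε e δ p : ℝ} (V₁ V₂ V₃ : Finset V)
    (hδ : 0 < δ) (hp : 0 < p) (he : 0 < e) (he1 : e ≤ 1/2)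
    (hε : 0 < ε) (hε10 : ε ≤ e/10) (hεδe : ε ≤ δ*e/2)
    (hreg23 : RegularPair G ε p V₂ V₃)
    (hA2 : ((V₂.filter fun v => ¬ TypicalVertex G ε p V₂ V₁ V₃ v).card : ℝ) ≤ ε * V₂.card)
    (hA3 : ((V₃.filter fun v => ¬ TypicalVertex G ε p V₃ V₁ V₂ v).card : ℝ) ≤ ε * V₃.card)
    (hd12 : δ * p ≤ dens G V₁ V₂) (hd13 : δ * p ≤ dens G V₁ V₃)
    (hd23 : δ * p ≤ dens G V₂ V₃) :
    ((((V₂ ×ˢ V₃).filter fun a => G.Adj a.1 a.2 ∧ ¬ GoodEdge G e V₁ V₂ V₃ a.1 a.2).card : ℝ))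
      ≤ 10 * ε * (dens G V₂ V₃ * V₂.card * V₃.card) := by
  classical
  have hε1 : ε ≤ 1/20 := by linarith
  have hεδ : ε ≤ δ/4 := by nlinarith
  have hd12pos : (0:ℝ) < dens G V₁ V₂ := lt_of_lt_of_le (by positivity) hd12
  have hd13pos : (0:ℝ) < dens G V₁ V₃ := lt_of_lt_of_le (by positivity) hd13
  have hd23pos : (0:ℝ) < dens G V₂ V₃ := lt_of_lt_of_le (by positivity) hd23
  have hn₁ : (1:ℝ) ≤ V₁.card := (dens_pos_cards G (by positivity) hd12).1
  have hn₂ : (1:ℝ) ≤ V₂.card := (dens_pos_cards G (by positivity) hd12).2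
  have hn₃ : (1:ℝ) ≤ V₃.card := (dens_pos_cards G (by positivity) hd23).2
  set A₂ := V₂.filter fun v => ¬ TypicalVertex G ε p V₂ V₁ V₃ v with hA₂def
  set A₃ := V₃.filter fun v => ¬ TypicalVertex G ε p V₃ V₁ V₂ v with hA₃def
  set Bad := (V₂ ×ˢ V₃).filter
    (fun a => G.Adj a.1 a.2 ∧ ¬ GoodEdge G e V₁ V₂ V₃ a.1 a.2) with hBaddef
  have hBadmem : ∀ a ∈ Bad, a.1 ∈ V₂ ∧ a.2 ∈ V₃ ∧ G.Adj a.1 a.2 ∧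
      ¬ GoodEdge G e V₁ V₂ V₃ a.1 a.2 := by
    intro a ha
    rw [hBaddef, Finset.mem_filter, Finset.mem_product] at ha
    exact ⟨ha.1.1, ha.1.2, ha.2.1, ha.2.2⟩
  show (Bad.card : ℝ) ≤ 10 * ε * (dens G V₂ V₃ * V₂.card * V₃.card)
  set B1 := Bad.filter (fun a => a.1 ∉ A₂) with hB1def
  set B2 := Bad.filter (fun a => a.1 ∈ A₂ ∧ a.2 ∉ A₃) with hB2def
  set B3 := Bad.filter (fun a => a.1 ∈ A₂ ∧ a.2 ∈ A₃) with hB3def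
  have hcover : Bad ⊆ B1 ∪ B2 ∪ B3 := by
    intro a ha
    simp only [hB1def, hB2def, hB3def, Finset.mem_union, Finset.mem_filter]
    by_cases h1 : a.1 ∈ A₂
    · by_cases h2 : a.2 ∈ A₃
      · exact Or.inr ⟨ha, h1, h2⟩
      · exact Or.inl (Or.inr ⟨ha, h1, h2⟩)
    · exact Or.inl (Or.inl ⟨ha, h1⟩)
  have hcards : (Bad.card : ℝ) ≤ B1.card + B2.card + B3.card := by
    have h1 := Finset.card_le_card hcover
    have h2 := Finset.card_union_le (B1 ∪ B2) B3
    have h3 := Finset.card_union_le B1 B2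
    push_cast
    have := le_trans h1 (le_trans h2 (Nat.add_le_add_right h3 _))
    exact_mod_cast this
  -- B1 : first coordinate typical
  have hB1 : (B1.card : ℝ) ≤
      (V₂.card : ℝ) * (2*ε*(1+ε) * (dens G V₂ V₃ * V₃.card)) := by
    have hmem : ∀ a ∈ B1, a.1 ∈ V₂ \ A₂ := by
      intro a ha
      rw [hB1def, Finset.mem_filter] at ha
      exact Finset.mem_sdiff.2 ⟨(hBadmem a ha.1).1, ha.2⟩
    have hfib := Finset.card_eq_sum_card_fiberwise hmem
    have hper : ∀ u ∈ V₂ \ A₂, ((B1.filter fun a => a.1 = u).card : ℝ) ≤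
        2*ε*(1+ε) * (dens G V₂ V₃ * V₃.card) := by
      intro u hu
      obtain ⟨hu2, hu2'⟩ := Finset.mem_sdiff.1 hu
      have hTyp : TypicalVertex G ε p V₂ V₁ V₃ u := by
        by_contra h
        exact hu2' (Finset.mem_filter.2 ⟨hu2, h⟩)
      have hinj : (B1.filter fun a => a.1 = u).card ≤
          ((nbhdIn G u V₃).filter fun w => ¬ GoodEdge G e V₁ V₂ V₃ u w).card := by
        apply Finset.card_le_card_of_injOn (fun a => a.2)
        · intro a ha
          obtain ⟨haB1, hau⟩ := Finset.mem_filter.1 ha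
          obtain ⟨haBad, -⟩ := Finset.mem_filter.1 haB1
          obtain ⟨h1, h2, h3, h4⟩ := hBadmem a haBad
          rw [Finset.mem_coe, Finset.mem_filter]
          refine ⟨Finset.mem_filter.2 ⟨h2, hau ▸ h3⟩, hau ▸ h4⟩
        · intro a ha b hb hab
          have h1 := (Finset.mem_filter.1 ha).2
          have h2 := (Finset.mem_filter.1 hb).2
          exact Prod.ext (h1.trans h2.symm) hab
      refine le_trans (Nat.cast_le.2 hinj) ?_
      have hres := few_bad_at G hp hδ hε he he1 hε10 hεδe hd12 hd13 hTyp
        (fun w => ¬ GoodEdge G e V₁ V₂ V₃ u w) ?_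
      · refine le_trans (le_of_eq (congrArg (fun s : Finset V => ((s.card : ℕ) : ℝ)) ?_)) hres
        ext y; simp only [Finset.mem_filter]
      intro w hw hnw S hS
      have hsub : (S.filter fun z => G.Adj z w) ⊆
          V₁.filter (fun x => G.Adj u x ∧ G.Adj w x) := by
        intro z hz
        obtain ⟨hz1, hz2⟩ := Finset.mem_filter.1 hz
        obtain ⟨hz3, hz4⟩ := Finset.mem_filter.1 (hS hz1)
        exact Finset.mem_filter.2 ⟨hz3, hz4, (G.adj_comm z w).1 hz2⟩
      have hle : ((S.filter fun z => G.Adj z w).card : ℝ) ≤ (codegIn G u w V₁ : ℝ) :=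
        Nat.cast_le.2 (Finset.card_le_card hsub)
      have hlt : (codegIn G u w V₁ : ℝ) <
          (1-e) * (dens G V₁ V₂ * dens G V₁ V₃ * V₁.card) := not_le.1 hnw
      linarith
    calc (B1.card : ℝ) = ∑ u ∈ V₂ \ A₂, ((B1.filter fun a => a.1 = u).card : ℝ) := by
          rw [hfib]; push_cast; rfl
      _ ≤ ∑ _u ∈ V₂ \ A₂, 2*ε*(1+ε) * (dens G V₂ V₃ * V₃.card) :=
          Finset.sum_le_sum hper
      _ = ((V₂ \ A₂).card : ℝ) * (2*ε*(1+ε) * (dens G V₂ V₃ * V₃.card)) := by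
          rw [Finset.sum_const, nsmul_eq_mul]
      _ ≤ (V₂.card : ℝ) * (2*ε*(1+ε) * (dens G V₂ V₃ * V₃.card)) := by
          have h1 : ((V₂ \ A₂).card : ℝ) ≤ V₂.card :=
            Nat.cast_le.2 (Finset.card_le_card (Finset.sdiff_subset))
          have h2 : (0:ℝ) ≤ 2*ε*(1+ε) * (dens G V₂ V₃ * V₃.card) := by positivity
          exact mul_le_mul_of_nonneg_right h1 h2
  -- B2 : second coordinate typical
  have hB2 : (B2.card : ℝ) ≤
      (V₃.card : ℝ) * (2*ε*(1+ε) * (dens G V₂ V₃ * V₂.card)) := by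
    have hmem : ∀ a ∈ B2, a.2 ∈ V₃ \ A₃ := by
      intro a ha
      rw [hB2def, Finset.mem_filter] at ha
      exact Finset.mem_sdiff.2 ⟨(hBadmem a ha.1).2.1, ha.2.2⟩
    have hfib := Finset.card_eq_sum_card_fiberwise hmem
    have hper : ∀ w ∈ V₃ \ A₃, ((B2.filter fun a => a.2 = w).card : ℝ) ≤
        2*ε*(1+ε) * (dens G V₂ V₃ * V₂.card) := by
      intro w hw
      obtain ⟨hw3, hw3'⟩ := Finset.mem_sdiff.1 hw
      have hTyp : TypicalVertex G ε p V₃ V₁ V₂ w := by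
        by_contra h
        exact hw3' (Finset.mem_filter.2 ⟨hw3, h⟩)
      have hinj : (B2.filter fun a => a.2 = w).card ≤
          ((nbhdIn G w V₂).filter fun u => ¬ GoodEdge G e V₁ V₂ V₃ u w).card := by
        apply Finset.card_le_card_of_injOn (fun a => a.1)
        · intro a ha
          obtain ⟨haB2, haw⟩ := Finset.mem_filter.1 ha
          obtain ⟨haBad, -⟩ := Finset.mem_filter.1 haB2
          obtain ⟨h1, h2, h3, h4⟩ := hBadmem a haBad
          rw [Finset.mem_coe, Finset.mem_filter]
          exact ⟨Finset.mem_filter.2 ⟨h1, haw ▸ (G.adj_comm _ _).1 h3⟩, haw ▸ h4⟩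
        · intro a ha b hb hab
          have h1 := (Finset.mem_filter.1 ha).2
          have h2 := (Finset.mem_filter.1 hb).2
          exact Prod.ext hab (h1.trans h2.symm)
      refine le_trans (Nat.cast_le.2 hinj) ?_
      have hres := few_bad_at G (Vb := V₃) (Vc := V₂) hp hδ hε he he1 hε10 hεδe
        hd13 hd12 hTyp (fun u => ¬ GoodEdge G e V₁ V₂ V₃ u w) ?_
      · rw [dens_comm G V₃ V₂] at hres
        refine le_trans (le_of_eq (congrArg (fun s : Finset V => ((s.card : ℕ) : ℝ)) ?_)) hres
        ext y; simp only [Finset.mem_filter]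
      intro u hu hnu S hS
      have hsub : (S.filter fun z => G.Adj z u) ⊆
          V₁.filter (fun x => G.Adj u x ∧ G.Adj w x) := by
        intro z hz
        obtain ⟨hz1, hz2⟩ := Finset.mem_filter.1 hz
        obtain ⟨hz3, hz4⟩ := Finset.mem_filter.1 (hS hz1)
        exact Finset.mem_filter.2 ⟨hz3, (G.adj_comm z u).1 hz2, hz4⟩
      have hle : ((S.filter fun z => G.Adj z u).card : ℝ) ≤ (codegIn G u w V₁ : ℝ) :=
        Nat.cast_le.2 (Finset.card_le_card hsub)
      have hlt : (codegIn G u w V₁ : ℝ) <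
          (1-e) * (dens G V₁ V₂ * dens G V₁ V₃ * V₁.card) := not_le.1 hnu
      have heq : dens G V₁ V₃ * dens G V₁ V₂ = dens G V₁ V₂ * dens G V₁ V₃ :=
        mul_comm _ _
      rw [heq]
      linarith
    calc (B2.card : ℝ) = ∑ w ∈ V₃ \ A₃, ((B2.filter fun a => a.2 = w).card : ℝ) := by
          rw [hfib]; push_cast; rfl
      _ ≤ ∑ _w ∈ V₃ \ A₃, 2*ε*(1+ε) * (dens G V₂ V₃ * V₂.card) :=
          Finset.sum_le_sum hper
      _ = ((V₃ \ A₃).card : ℝ) * (2*ε*(1+ε) * (dens G V₂ V₃ * V₂.card)) := by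
          rw [Finset.sum_const, nsmul_eq_mul]
      _ ≤ (V₃.card : ℝ) * (2*ε*(1+ε) * (dens G V₂ V₃ * V₂.card)) := by
          have h1 : ((V₃ \ A₃).card : ℝ) ≤ V₃.card :=
            Nat.cast_le.2 (Finset.card_le_card (Finset.sdiff_subset))
          have h2 : (0:ℝ) ≤ 2*ε*(1+ε) * (dens G V₂ V₃ * V₂.card) := by positivity
          exact mul_le_mul_of_nonneg_right h1 h2
  -- B3 : both atypical
  have hB3 : (B3.card : ℝ) ≤ 8*ε^2 * (dens G V₂ V₃ * V₂.card * V₃.card) := by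
    by_cases hA₂e : A₂ = ∅
    · have : B3 = ∅ := by
        rw [Finset.eq_empty_iff_forall_notMem]
        intro a ha
        rw [hB3def, Finset.mem_filter] at ha
        rw [hA₂e] at ha
        exact absurd ha.2.1 (Finset.notMem_empty _)
      rw [this]
      simp only [Finset.card_empty, Nat.cast_zero]
      positivity
    by_cases hA₃e : A₃ = ∅
    · have : B3 = ∅ := by
        rw [Finset.eq_empty_iff_forall_notMem]
        intro a ha
        rw [hB3def, Finset.mem_filter] at ha
        rw [hA₃e] at ha
        exact absurd ha.2.2 (Finset.notMem_empty _)
      rw [this]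
      simp only [Finset.card_empty, Nat.cast_zero]
      positivity
    have hA₂ne : 1 ≤ A₂.card := Finset.card_pos.2 (Finset.nonempty_of_ne_empty hA₂e)
    have hA₃ne : 1 ≤ A₃.card := Finset.card_pos.2 (Finset.nonempty_of_ne_empty hA₃e)
    have hεn₂ : (1:ℝ) ≤ ε * V₂.card := le_trans (by exact_mod_cast hA₂ne) hA2
    have hεn₃ : (1:ℝ) ≤ ε * V₃.card := le_trans (by exact_mod_cast hA₃ne) hA3
    have hε1' : ε ≤ 1 := by linarith
    have hm₂le : ⌈ε * (V₂.card:ℝ)⌉₊ ≤ V₂.card :=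
      Nat.ceil_le.2 (by nlinarith [Nat.cast_nonneg (α := ℝ) V₂.card])
    have hm₃le : ⌈ε * (V₃.card:ℝ)⌉₊ ≤ V₃.card :=
      Nat.ceil_le.2 (by nlinarith [Nat.cast_nonneg (α := ℝ) V₃.card])
    have hA₂m : A₂.card ≤ ⌈ε * (V₂.card:ℝ)⌉₊ := by
      have := le_trans hA2 (Nat.le_ceil _)
      exact_mod_cast this
    have hA₃m : A₃.card ≤ ⌈ε * (V₃.card:ℝ)⌉₊ := by
      have := le_trans hA3 (Nat.le_ceil _)
      exact_mod_cast this
    obtain ⟨A, hA₂A, hAV₂, hAcard⟩ :=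
      Finset.exists_subsuperset_card_eq (Finset.filter_subset _ _) hA₂m hm₂le
    obtain ⟨B, hA₃B, hBV₃, hBcard⟩ :=
      Finset.exists_subsuperset_card_eq (Finset.filter_subset _ _) hA₃m hm₃le
    have hAc : ε * V₂.card ≤ (A.card : ℝ) := by rw [hAcard]; exact Nat.le_ceil _
    have hBc : ε * V₃.card ≤ (B.card : ℝ) := by rw [hBcard]; exact Nat.le_ceil _
    have hreg' := hreg23 A hAV₂ B hBV₃ hAc hBc
    have hdAB : dens G A B ≤ dens G V₂ V₃ + ε * p := by
      have := (abs_le.1 hreg').1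
      linarith
    have hsub3 : B3 ⊆ (A ×ˢ B).filter fun a => G.Adj a.1 a.2 := by
      intro a ha
      rw [hB3def, Finset.mem_filter] at ha
      obtain ⟨haBad, h1, h2⟩ := ha
      exact Finset.mem_filter.2 ⟨Finset.mem_product.2 ⟨hA₂A h1, hA₃B h2⟩,
        (hBadmem a haBad).2.2.1⟩
    have hcard3 : (B3.card : ℝ) ≤ (eBtw G A B : ℝ) :=
      Nat.cast_le.2 (Finset.card_le_card hsub3)
    have hAcr : (A.card : ℝ) ≤ 2 * (ε * V₂.card) := by
      rw [hAcard]
      have := Nat.ceil_lt_add_one (by positivity : (0:ℝ) ≤ ε * V₂.card)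
      linarith
    have hBcr : (B.card : ℝ) ≤ 2 * (ε * V₃.card) := by
      rw [hBcard]
      have := Nat.ceil_lt_add_one (by positivity : (0:ℝ) ≤ ε * V₃.card)
      linarith
    have hεpd : ε * p ≤ dens G V₂ V₃ := by nlinarith
    have hEB : (eBtw G A B : ℝ) ≤ (dens G V₂ V₃ + ε * p) * ((A.card:ℝ) * B.card) := by
      rw [eBtw_cast]
      apply mul_le_mul_of_nonneg_right hdAB (by positivity)
    have hprod : ((A.card:ℝ) * B.card) ≤ 4 * ε^2 * (V₂.card * V₃.card) := by
      have h0A : (0:ℝ) ≤ A.card := Nat.cast_nonneg _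
      nlinarith [mul_le_mul hAcr hBcr (Nat.cast_nonneg _) (by positivity : (0:ℝ) ≤ 2*(ε*(V₂.card:ℝ)))]
    calc (B3.card : ℝ) ≤ (eBtw G A B : ℝ) := hcard3
      _ ≤ (dens G V₂ V₃ + ε * p) * ((A.card:ℝ) * B.card) := hEB
      _ ≤ (2 * dens G V₂ V₃) * (4 * ε^2 * (V₂.card * V₃.card)) := by
          apply mul_le_mul (by linarith) hprod (by positivity) (by positivity)
      _ = 8*ε^2 * (dens G V₂ V₃ * V₂.card * V₃.card) := by ring
  -- combine
  have hfinal : 2 * (2*ε*(1+ε)) + 8*ε^2 ≤ 10*ε := by nlinarith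
  have hd23nn : (0:ℝ) ≤ dens G V₂ V₃ * V₂.card * V₃.card := by positivity
  nlinarith [hcards, hB1, hB2, hB3, hd23nn,
    mul_le_mul_of_nonneg_right hfinal hd23nn]

end BadBound

section MainCore

variable {V : Type*}

set_option maxHeartbeats 1600000 in
lemma main_core (G : SimpleGraph V) {ε e δ p : ℝ} (V₁ V₂ V₃ : Finset V)
    (hδ : 0 < δ) (hp : 0 < p) (he : 0 < e) (he1 : e ≤ 1/2)
    (hε : 0 < ε) (hε10 : ε ≤ e/10) (hεδe : ε ≤ δ*e/2) (hεnum : ε ≤ δ^2*e^2/100)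
    (hTT : TypicalTriple G ε p V₁ V₂ V₃)
    (hd12 : δ * p ≤ dens G V₁ V₂) (hd13 : δ * p ≤ dens G V₁ V₃)
    (hd23 : δ * p ≤ dens G V₂ V₃)
    (hcodeg : ∀ u ∈ V₂, ∀ w ∈ V₃, G.Adj u w →
      (codegIn G u w V₁ : ℝ) ≤ 4 * p ^ 2 * V₁.card) :
    ((V₁.filter fun v => ¬ GoodVertex G e p V₁ V₂ V₃ v).card : ℝ) ≤ e * V₁.card := by
  classical
  obtain ⟨⟨hreg12, hreg13, hreg23⟩, hA1, hA2, hA3⟩ := hTT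
  have hε1 : ε ≤ 1/20 := by linarith
  have hεδ : ε ≤ δ/4 := by nlinarith
  have hd12pos : (0:ℝ) < dens G V₁ V₂ := lt_of_lt_of_le (by positivity) hd12
  have hd13pos : (0:ℝ) < dens G V₁ V₃ := lt_of_lt_of_le (by positivity) hd13
  have hd23pos : (0:ℝ) < dens G V₂ V₃ := lt_of_lt_of_le (by positivity) hd23
  have hn₁ : (1:ℝ) ≤ V₁.card := (dens_pos_cards G (by positivity) hd12).1
  have hn₂ : (1:ℝ) ≤ V₂.card := (dens_pos_cards G (by positivity) hd12).2
  have hn₃ : (1:ℝ) ≤ V₃.card := (dens_pos_cards G (by positivity) hd23).2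
  set A₂ := V₂.filter fun v => ¬ TypicalVertex G ε p V₂ V₁ V₃ v with hA₂def
  set A₃ := V₃.filter fun v => ¬ TypicalVertex G ε p V₃ V₁ V₂ v with hA₃def
  set Bad := (V₂ ×ˢ V₃).filter
    (fun a => G.Adj a.1 a.2 ∧ ¬ GoodEdge G e V₁ V₂ V₃ a.1 a.2) with hBaddef
  have hBadmem : ∀ a ∈ Bad, a.1 ∈ V₂ ∧ a.2 ∈ V₃ ∧ G.Adj a.1 a.2 ∧
      ¬ GoodEdge G e V₁ V₂ V₃ a.1 a.2 := by
    intro a ha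
    rw [hBaddef, Finset.mem_filter, Finset.mem_product] at ha
    exact ⟨ha.1.1, ha.1.2, ha.2.1, ha.2.2⟩
  -- bound on number of bad edges
  have hBad : (Bad.card : ℝ) ≤ 10 * ε * (dens G V₂ V₃ * V₂.card * V₃.card) := by
    exact bad_edges_bound G V₁ V₂ V₃ hδ hp he he1 hε hε10 hεδe hreg23 hA2 hA3 hd12 hd13 hd23
  -- total codegree over bad edges
  have hT : (∑ a ∈ Bad, (codegIn G a.1 a.2 V₁ : ℝ)) ≤
      (Bad.card : ℝ) * (4 * p^2 * V₁.card) := by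
    calc (∑ a ∈ Bad, (codegIn G a.1 a.2 V₁ : ℝ))
        ≤ ∑ _a ∈ Bad, 4*p^2*(V₁.card:ℝ) := by
          refine Finset.sum_le_sum fun a ha => ?_
          obtain ⟨h1, h2, h3, -⟩ := hBadmem a ha
          exact hcodeg a.1 h1 a.2 h2 h3
      _ = (Bad.card : ℝ) * (4*p^2*V₁.card) := by rw [Finset.sum_const, nsmul_eq_mul]
  -- double counting
  have hswapN : (∑ v ∈ V₁, (((nbhdIn G v V₂ ×ˢ nbhdIn G v V₃).filter fun a =>
      G.Adj a.1 a.2 ∧ ¬ GoodEdge G e V₁ V₂ V₃ a.1 a.2).card)) =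
      ∑ a ∈ Bad, codegIn G a.1 a.2 V₁ := by
    have h1 : ∀ v : V, ((nbhdIn G v V₂ ×ˢ nbhdIn G v V₃).filter fun a =>
        G.Adj a.1 a.2 ∧ ¬ GoodEdge G e V₁ V₂ V₃ a.1 a.2) =
        Bad.filter (fun a => G.Adj v a.1 ∧ G.Adj v a.2) := by
      intro v
      ext a
      simp only [Finset.mem_filter, Finset.mem_product, hBaddef, nbhdIn]
      tauto
    have h2 : ∀ a : V × V, (V₁.filter fun v => G.Adj v a.1 ∧ G.Adj v a.2).card =
        codegIn G a.1 a.2 V₁ := by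
      intro a
      unfold codegIn
      congr! 1
      apply Finset.filter_congr
      intro x _
      rw [G.adj_comm a.1 x, G.adj_comm a.2 x]
    have h3 : (∑ v ∈ V₁, (Bad.filter (fun a => G.Adj v a.1 ∧ G.Adj v a.2)).card) =
        ∑ a ∈ Bad, (V₁.filter fun v => G.Adj v a.1 ∧ G.Adj v a.2).card := by
      simp only [Finset.card_filter]
      exact Finset.sum_comm
    calc (∑ v ∈ V₁, (((nbhdIn G v V₂ ×ˢ nbhdIn G v V₃).filter fun a =>
          G.Adj a.1 a.2 ∧ ¬ GoodEdge G e V₁ V₂ V₃ a.1 a.2).card))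
        = ∑ v ∈ V₁, (Bad.filter (fun a => G.Adj v a.1 ∧ G.Adj v a.2)).card :=
          Finset.sum_congr rfl fun v _ => by rw [h1 v]
      _ = ∑ a ∈ Bad, (V₁.filter fun v => G.Adj v a.1 ∧ G.Adj v a.2).card := h3
      _ = ∑ a ∈ Bad, codegIn G a.1 a.2 V₁ :=
          Finset.sum_congr rfl fun a _ => h2 a
  have hswap : (∑ v ∈ V₁, ((((nbhdIn G v V₂ ×ˢ nbhdIn G v V₃).filter fun a =>
      G.Adj a.1 a.2 ∧ ¬ GoodEdge G e V₁ V₂ V₃ a.1 a.2).card : ℝ))) =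
      ∑ a ∈ Bad, (codegIn G a.1 a.2 V₁ : ℝ) := by
    have := congrArg (Nat.cast : ℕ → ℝ) hswapN
    push_cast at this
    exact this
  -- vertices with too many bad edges
  have hDpos : (0:ℝ) < dens G V₁ V₂ * dens G V₁ V₃ * dens G V₂ V₃ *
      V₂.card * V₃.card := by
    have h2 : (0:ℝ) < V₂.card := by linarith
    have h3 : (0:ℝ) < V₃.card := by linarith
    positivity
  have hsubS : V₁.filter (fun v => ¬ GoodVertex G e p V₁ V₂ V₃ v) ⊆
      (V₁.filter fun v => ¬ TypicalVertex G ε p V₁ V₂ V₃ v) ∪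
      (V₁.filter fun v =>
        e * (dens G V₁ V₂ * dens G V₁ V₃ * dens G V₂ V₃ * V₂.card * V₃.card) <
        ((((nbhdIn G v V₂ ×ˢ nbhdIn G v V₃).filter fun a =>
          G.Adj a.1 a.2 ∧ ¬ GoodEdge G e V₁ V₂ V₃ a.1 a.2).card : ℝ))) := by
    intro v hv
    obtain ⟨hv1, hv2⟩ := Finset.mem_filter.1 hv
    by_cases ht : TypicalVertex G ε p V₁ V₂ V₃ v
    · refine Finset.mem_union_right _ (Finset.mem_filter.2 ⟨hv1, ?_⟩)
      by_contra hcount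
      push_neg at hcount
      refine hv2 ⟨typicalVertex_mono G hp.le (by linarith : ε ≤ e) ht, ?_⟩
      convert hcount using 3
    · exact Finset.mem_union_left _ (Finset.mem_filter.2 ⟨hv1, ht⟩)
  set S := V₁.filter (fun v =>
      e * (dens G V₁ V₂ * dens G V₁ V₃ * dens G V₂ V₃ * V₂.card * V₃.card) <
      ((((nbhdIn G v V₂ ×ˢ nbhdIn G v V₃).filter fun a =>
        G.Adj a.1 a.2 ∧ ¬ GoodEdge G e V₁ V₂ V₃ a.1 a.2).card : ℝ))) with hSdef
  have hsum1 : (S.card : ℝ) *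
      (e * (dens G V₁ V₂ * dens G V₁ V₃ * dens G V₂ V₃ * V₂.card * V₃.card)) ≤
      ∑ v ∈ S, ((((nbhdIn G v V₂ ×ˢ nbhdIn G v V₃).filter fun a =>
        G.Adj a.1 a.2 ∧ ¬ GoodEdge G e V₁ V₂ V₃ a.1 a.2).card : ℝ)) := by
    rw [← nsmul_eq_mul]
    refine Finset.card_nsmul_le_sum S _ _ fun v hv => ?_
    exact le_of_lt (Finset.mem_filter.1 hv).2
  have hsum2 : (∑ v ∈ S, ((((nbhdIn G v V₂ ×ˢ nbhdIn G v V₃).filter fun a =>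
      G.Adj a.1 a.2 ∧ ¬ GoodEdge G e V₁ V₂ V₃ a.1 a.2).card : ℝ))) ≤
      ∑ v ∈ V₁, ((((nbhdIn G v V₂ ×ˢ nbhdIn G v V₃).filter fun a =>
      G.Adj a.1 a.2 ∧ ¬ GoodEdge G e V₁ V₂ V₃ a.1 a.2).card : ℝ)) := by
    refine Finset.sum_le_sum_of_subset_of_nonneg (Finset.filter_subset _ _)
      fun v _ _ => by positivity
  -- bound |S|
  have hSbound : (S.card : ℝ) ≤ (2*e/5) * V₁.card := by
    have hchain : (S.card : ℝ) *
        (e * (dens G V₁ V₂ * dens G V₁ V₃ * dens G V₂ V₃ * V₂.card * V₃.card)) ≤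
        10 * ε * (dens G V₂ V₃ * V₂.card * V₃.card) * (4 * p^2 * V₁.card) := by
      have h4 : (0:ℝ) ≤ 4 * p^2 * V₁.card := by positivity
      calc (S.card : ℝ) *
          (e * (dens G V₁ V₂ * dens G V₁ V₃ * dens G V₂ V₃ * V₂.card * V₃.card))
          ≤ ∑ a ∈ Bad, (codegIn G a.1 a.2 V₁ : ℝ) := by
            rw [← hswap]; exact le_trans hsum1 hsum2
        _ ≤ (Bad.card : ℝ) * (4 * p^2 * V₁.card) := hT
        _ ≤ 10 * ε * (dens G V₂ V₃ * V₂.card * V₃.card) * (4 * p^2 * V₁.card) :=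
            mul_le_mul_of_nonneg_right hBad h4
    -- compare with the trivial lower bound on the density product
    have hC : (0:ℝ) < e * ((δ*p) * (δ*p) * dens G V₂ V₃ * V₂.card * V₃.card) := by
      have h2 : (0:ℝ) < V₂.card := by linarith
      have h3 : (0:ℝ) < V₃.card := by linarith
      positivity
    have hDge : e * ((δ*p) * (δ*p) * dens G V₂ V₃ * V₂.card * V₃.card) ≤
        e * (dens G V₁ V₂ * dens G V₁ V₃ * dens G V₂ V₃ * V₂.card * V₃.card) := by
      have hmul : (δ*p) * (δ*p) ≤ dens G V₁ V₂ * dens G V₁ V₃ :=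
        mul_le_mul hd12 hd13 (by positivity) (le_of_lt hd12pos)
      have h5 := mul_le_mul_of_nonneg_right hmul
        (show (0:ℝ) ≤ dens G V₂ V₃ * ((V₂.card:ℝ) * V₃.card) by positivity)
      have hAB : (δ*p) * (δ*p) * dens G V₂ V₃ * V₂.card * V₃.card ≤
          dens G V₁ V₂ * dens G V₁ V₃ * dens G V₂ V₃ * V₂.card * V₃.card := by
        calc (δ*p) * (δ*p) * dens G V₂ V₃ * V₂.card * V₃.card
            = ((δ*p) * (δ*p)) * (dens G V₂ V₃ * ((V₂.card:ℝ) * V₃.card)) := by ring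
          _ ≤ (dens G V₁ V₂ * dens G V₁ V₃) * (dens G V₂ V₃ * ((V₂.card:ℝ) * V₃.card)) := h5
          _ = dens G V₁ V₂ * dens G V₁ V₃ * dens G V₂ V₃ * V₂.card * V₃.card := by ring
      exact mul_le_mul_of_nonneg_left hAB he.le
    have hS0 : (0:ℝ) ≤ (S.card : ℝ) := Nat.cast_nonneg _
    have hleft : (S.card : ℝ) * (e * ((δ*p) * (δ*p) * dens G V₂ V₃ * V₂.card * V₃.card)) ≤
        10 * ε * (dens G V₂ V₃ * V₂.card * V₃.card) * (4 * p^2 * V₁.card) :=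
      le_trans (mul_le_mul_of_nonneg_left hDge hS0) hchain
    have hright : 10 * ε * (dens G V₂ V₃ * V₂.card * V₃.card) * (4 * p^2 * V₁.card) ≤
        ((2*e/5) * V₁.card) * (e * ((δ*p) * (δ*p) * dens G V₂ V₃ * V₂.card * V₃.card)) := by
      have hq : (0:ℝ) ≤ dens G V₂ V₃ * V₂.card * V₃.card * p^2 * V₁.card := by positivity
      have h40 : 40 * ε ≤ (2*e/5) * (e * δ^2) := by nlinarith
      calc 10 * ε * (dens G V₂ V₃ * V₂.card * V₃.card) * (4 * p^2 * V₁.card)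
          = (40 * ε) * (dens G V₂ V₃ * V₂.card * V₃.card * p^2 * V₁.card) := by ring
        _ ≤ ((2*e/5) * (e * δ^2)) * (dens G V₂ V₃ * V₂.card * V₃.card * p^2 * V₁.card) :=
            mul_le_mul_of_nonneg_right h40 hq
        _ = ((2*e/5) * V₁.card) * (e * ((δ*p) * (δ*p) * dens G V₂ V₃ * V₂.card * V₃.card)) := by
            ring
    exact le_of_mul_le_mul_right (le_trans hleft hright) hC
  -- finish
  have hfin1 : ((V₁.filter fun v => ¬ GoodVertex G e p V₁ V₂ V₃ v).card : ℝ) ≤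
      ((V₁.filter fun v => ¬ TypicalVertex G ε p V₁ V₂ V₃ v).card : ℝ) + S.card := by
    have h1 := Finset.card_le_card hsubS
    have h2 := Finset.card_union_le
      (V₁.filter fun v => ¬ TypicalVertex G ε p V₁ V₂ V₃ v) S
    exact_mod_cast le_trans h1 h2
  have : ε * (V₁.card:ℝ) + (2*e/5) * V₁.card ≤ e * V₁.card := by nlinarith
  linarith [hA1, hSbound, hfin1]

end MainCore



/-- **Proposition (most vertices are good).** For all positive `ε'`, `δ` there is `ε > 0` such
that in every `ε`-typical `(ε,p)`-regular triple of minimum density at least `δp`, in which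
the endpoints of every edge between `V₂`,`V₃` have at most `4p²|V₁|` common neighbours in
`V₁`, at most `ε'|V₁|` vertices of `V₁` are not `ε'`-good. -/
theorem stmt_7 (ε' δ : ℝ) (hε' : 0 < ε') (hδ : 0 < δ) :
    ∃ ε : ℝ, 0 < ε ∧
      ∀ (V : Type) [Fintype V] [DecidableEq V] (G : SimpleGraph V) (p : ℝ)
        (V₁ V₂ V₃ : Finset V), 0 < p →
        Disjoint V₁ V₂ → Disjoint V₁ V₃ → Disjoint V₂ V₃ →
        TypicalTriple G ε p V₁ V₂ V₃ →
        δ * p ≤ dens G V₁ V₂ → δ * p ≤ dens G V₁ V₃ → δ * p ≤ dens G V₂ V₃ →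
        (∀ u ∈ V₂, ∀ w ∈ V₃, G.Adj u w → (codegIn G u w V₁ : ℝ) ≤ 4 * p ^ 2 * V₁.card) →
        ((V₁.filter fun v => ¬ GoodVertex G ε' p V₁ V₂ V₃ v).card : ℝ) ≤ ε' * V₁.card := by
  classical
  set e := min ε' (1/2) with hedef
  have he : 0 < e := lt_min hε' (by norm_num)
  have he1 : e ≤ 1/2 := min_le_right _ _
  have heε' : e ≤ ε' := min_le_left _ _
  refine ⟨min (e/10) (min (δ*e/2) (δ^2*e^2/100)), ?_, ?_⟩
  · exact lt_min (by positivity) (lt_min (by positivity) (by positivity))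
  intro V _ _ G p V₁ V₂ V₃ hp _ _ _ hTT hd12 hd13 hd23 hcodeg
  have hε : 0 < min (e/10) (min (δ*e/2) (δ^2*e^2/100)) :=
    lt_min (by positivity) (lt_min (by positivity) (by positivity))
  have hε10 : min (e/10) (min (δ*e/2) (δ^2*e^2/100)) ≤ e/10 := min_le_left _ _
  have hεδe : min (e/10) (min (δ*e/2) (δ^2*e^2/100)) ≤ δ*e/2 :=
    le_trans (min_le_right _ _) (min_le_left _ _)
  have hεnum : min (e/10) (min (δ*e/2) (δ^2*e^2/100)) ≤ δ^2*e^2/100 :=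
    le_trans (min_le_right _ _) (min_le_right _ _)
  have hcore := main_core G V₁ V₂ V₃ hδ hp he he1 hε hε10 hεδe hεnum hTT
    hd12 hd13 hd23 hcodeg
  have hD0 : (0:ℝ) ≤ dens G V₁ V₂ * dens G V₁ V₃ * dens G V₂ V₃ *
      V₂.card * V₃.card := by
    have h1 := dens_nonneg G V₁ V₂
    have h2 := dens_nonneg G V₁ V₃
    have h3 := dens_nonneg G V₂ V₃
    positivity
  have hmono : ∀ v, GoodVertex G e p V₁ V₂ V₃ v → GoodVertex G ε' p V₁ V₂ V₃ v := by
    intro v hv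
    obtain ⟨ht, hcount⟩ := hv
    refine ⟨typicalVertex_mono G hp.le heε' ht, ?_⟩
    have hsub : ((nbhdIn G v V₂ ×ˢ nbhdIn G v V₃).filter fun uw =>
        G.Adj uw.1 uw.2 ∧ ¬ GoodEdge G ε' V₁ V₂ V₃ uw.1 uw.2) ⊆
        ((nbhdIn G v V₂ ×ˢ nbhdIn G v V₃).filter fun uw =>
        G.Adj uw.1 uw.2 ∧ ¬ GoodEdge G e V₁ V₂ V₃ uw.1 uw.2) := by
      intro a ha
      obtain ⟨h1, h2, h3⟩ := Finset.mem_filter.1 ha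
      exact Finset.mem_filter.2 ⟨h1, h2, fun hg => h3 (goodEdge_mono G heε' hg)⟩
    calc ((((nbhdIn G v V₂ ×ˢ nbhdIn G v V₃).filter fun uw =>
          G.Adj uw.1 uw.2 ∧ ¬ GoodEdge G ε' V₁ V₂ V₃ uw.1 uw.2).card : ℝ))
        ≤ (((nbhdIn G v V₂ ×ˢ nbhdIn G v V₃).filter fun uw =>
          G.Adj uw.1 uw.2 ∧ ¬ GoodEdge G e V₁ V₂ V₃ uw.1 uw.2).card : ℝ) :=
          Nat.cast_le.2 (Finset.card_le_card hsub)
      _ ≤ e * (dens G V₁ V₂ * dens G V₁ V₃ * dens G V₂ V₃ * V₂.card * V₃.card) := hcount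
      _ ≤ ε' * (dens G V₁ V₂ * dens G V₁ V₃ * dens G V₂ V₃ * V₂.card * V₃.card) :=
          mul_le_mul_of_nonneg_right heε' hD0
  have hsubset : (V₁.filter fun v => ¬ GoodVertex G ε' p V₁ V₂ V₃ v) ⊆
      (V₁.filter fun v => ¬ GoodVertex G e p V₁ V₂ V₃ v) := by
    intro v hv
    obtain ⟨h1, h2⟩ := Finset.mem_filter.1 hv
    exact Finset.mem_filter.2 ⟨h1, fun hg => h2 (hmono v hg)⟩
  calc ((V₁.filter fun v => ¬ GoodVertex G ε' p V₁ V₂ V₃ v).card : ℝ)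
      ≤ ((V₁.filter fun v => ¬ GoodVertex G e p V₁ V₂ V₃ v).card : ℝ) :=
        Nat.cast_le.2 (Finset.card_le_card hsubset)
    _ ≤ e * V₁.card := hcore
    _ ≤ ε' * V₁.card := mul_le_mul_of_nonneg_right heε' (Nat.cast_nonneg _)
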